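/- Let G = ([n], E) be a natural unit interval graph and let T be a subtree of G containing a cut vertex c of G separating vertices ≤ c from vertices > c. If T is decreasing (every vertex except the maximum has exactly one larger neighbour in T), then the tree list σ = list(T) consists of all vertices of T that are at most c, in some order, followed by all vertices of T strictly greater than c, in some order. -/

import Mathlib

/-- `G` is a natural unit interval graph: for `i < j < k`, if `{i,k}` is an edge then so
are `{i,j}` and `{j,k}`. -/
def IsNUIG {n : ℕ} (G : SimpleGraph (Fin n)) : Prop :=
  ∀ i j k : Fin n, i < j → j < k → G.Adj i k → G.Adj i j ∧ G.Adj j k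

/-- A subgraph `T` of `G` is a decreasing subtree if it is a tree and every vertex having
a larger vertex in `T` has exactly one larger neighbour in `T`. -/
def IsDecreasingTree {n : ℕ} (G : SimpleGraph (Fin n)) (T : G.Subgraph) : Prop :=
  T.verts.Nonempty ∧ T.coe.IsTree ∧
    ∀ v ∈ T.verts, (∃ u ∈ T.verts, v < u) → ∃! w : Fin n, v < w ∧ T.Adj v w

/-- `l` is the reading order `list(T)` of the subtree `T`: a duplicate-free listing of the
vertices of `T`, starting with the smallest vertex, such that each subsequent entry is the
smallest not-yet-read vertex of `T` adjacent in `T` to an already-read vertex. -/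
def IsReadList {n : ℕ} {G : SimpleGraph (Fin n)} (T : G.Subgraph) (l : List (Fin n)) :
    Prop :=
  l.Nodup ∧ (∀ v : Fin n, v ∈ l ↔ v ∈ T.verts) ∧
    (∀ h0 : 0 < l.length, ∀ v ∈ T.verts, l.get ⟨0, h0⟩ ≤ v) ∧
    ∀ t : ℕ, ∀ ht : t < l.length, 0 < t →
      IsLeast {v : Fin n | v ∈ T.verts ∧ v ∉ l.take t ∧ ∃ u ∈ l.take t, T.Adj u v}
        (l.get ⟨t, ht⟩)



open SimpleGraph

/-- If a walk in `T.coe` goes from a vertex `≤ c` to a vertex `> c`, it passes through `c`. -/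
lemma cross_mem {n : ℕ} {G : SimpleGraph (Fin n)} {T : G.Subgraph} {c : Fin n}
    (hcut : ∀ u v : Fin n, u < c → c < v → ¬ G.Adj u v) :
    ∀ {x z : T.verts} (q : T.coe.Walk x z), (x : Fin n) ≤ c → c < (z : Fin n) →
      ∃ y ∈ q.support, (y : Fin n) = c := by
  intro x z q
  induction q with
  | nil => intro h1 h2; exact absurd h2 (not_lt.mpr h1)
  | @cons x y z h q ih =>
    intro hx hz
    by_cases hy : (y : Fin n) ≤ c
    · obtain ⟨y', hy', hy'c⟩ := ih hy hz
      exact ⟨y', by rw [Walk.support_cons]; exact List.mem_cons_of_mem _ hy', hy'c⟩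
    · push_neg at hy
      have hadj : G.Adj (x : Fin n) (y : Fin n) := T.adj_sub h
      have hxc : (x : Fin n) = c := by
        by_contra hne
        exact hcut _ _ (lt_of_le_of_ne hx hne) hy hadj
      exact ⟨x, Walk.start_mem_support _, hxc⟩

/-- On a path between two vertices `≤ c`, every vertex is `≤ c`. -/
lemma support_le {n : ℕ} {G : SimpleGraph (Fin n)} {T : G.Subgraph} {c : Fin n}
    (hcut : ∀ u v : Fin n, u < c → c < v → ¬ G.Adj u v)
    {a w : T.verts} (p : T.coe.Walk a w) (hp : p.IsPath)
    (ha : (a : Fin n) ≤ c) (hw : (w : Fin n) ≤ c) :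
    ∀ y ∈ p.support, (y : Fin n) ≤ c := by
  intro y hy
  by_contra hyc
  push_neg at hyc
  obtain ⟨u1, hu1, hu1c⟩ := cross_mem hcut (p.takeUntil y hy) ha hyc
  obtain ⟨u2, hu2, hu2c⟩ := cross_mem hcut ((p.dropUntil y hy).reverse) hw hyc
  rw [Walk.support_reverse, List.mem_reverse] at hu2
  have hns : p.support.Nodup := hp.support_nodup
  have hspec := Walk.take_spec p hy
  have hsup : p.support = (p.takeUntil y hy).support ++ (p.dropUntil y hy).support.tail := by
    conv_lhs => rw [← hspec]
    exact Walk.support_append _ _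
  rw [hsup, List.nodup_append] at hns
  have hu2t : u2 ∈ (p.dropUntil y hy).support.tail := by
    have hcons := Walk.support_eq_cons (p.dropUntil y hy)
    rw [hcons] at hu2
    rcases List.mem_cons.mp hu2 with h | h
    · exfalso; rw [h] at hu2c; exact absurd hu2c.symm (ne_of_lt hyc)
    · exact h
  have huu : u1 = u2 := Subtype.ext (hu1c.trans hu2c.symm)
  exact hns.2.2 u1 hu1 u2 hu2t huu

/-- Walking from a vertex satisfying `S` to one not satisfying `S`, there is an edge of `T`
from an `S`-vertex to a non-`S`-vertex on the walk. -/
lemma find_edge {n : ℕ} {G : SimpleGraph (Fin n)} {T : G.Subgraph} (S : Fin n → Prop) :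
    ∀ {x z : T.verts} (q : T.coe.Walk x z), S x → ¬ S z →
      ∃ u v : T.verts, S u ∧ ¬ S v ∧ v ∈ q.support ∧ T.Adj u v := by
  intro x z q
  induction q with
  | nil => intro h1 h2; exact absurd h1 h2
  | @cons x y z h q ih =>
    intro hx hz
    by_cases hy : S y
    · obtain ⟨u, v, h1, h2, h3, h4⟩ := ih hy hz
      exact ⟨u, v, h1, h2, by rw [Walk.support_cons]; exact List.mem_cons_of_mem _ h3, h4⟩
    · refine ⟨x, y, hx, hy, ?_, h⟩
      rw [Walk.support_cons]
      exact List.mem_cons_of_mem _ (Walk.start_mem_support _)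


/-- if `T` is a decreasing subtree of a natural unit interval graph `G`
containing a cut vertex `c` (no edge of `G` joins a vertex `< c` to a vertex `> c`), then
the tree list of `T` lists all vertices `≤ c` before all vertices `> c`. -/
theorem readList_cut_vertex {n : ℕ} (G : SimpleGraph (Fin n)) (hG : IsNUIG G)
    (T : G.Subgraph) (hT : IsDecreasingTree G T) (c : Fin n) (hc : c ∈ T.verts)
    (hcut : ∀ u v : Fin n, u < c → c < v → ¬ G.Adj u v)
    (l : List (Fin n)) (hl : IsReadList T l) :
    ∀ s t : Fin l.length, s ≤ t → l.get t ≤ c → l.get s ≤ c := by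
  classical
  obtain ⟨hnd, hmem, hmin, hleast⟩ := hl
  intro s t hst htc
  by_contra hsc
  push_neg at hsc
  have h0 : 0 < l.length := lt_of_le_of_lt (Nat.zero_le _) t.isLt
  have haT : l.get ⟨0, h0⟩ ∈ T.verts := (hmem _).mp (l.get_mem _)
  have hac : l.get ⟨0, h0⟩ ≤ c := hmin h0 c hc
  have hex : ∃ i : ℕ, ∃ h : i < l.length, c < l.get ⟨i, h⟩ :=
    ⟨s.val, s.isLt, by simpa using hsc⟩
  set ts := Nat.find hex with htsdef
  obtain ⟨hts_lt, hts_gt⟩ := Nat.find_spec hex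
  have hts_le : ts ≤ s.val := Nat.find_le ⟨s.isLt, by simpa using hsc⟩
  have hts_pos : 0 < ts := by
    rcases Nat.eq_zero_or_pos ts with h | h
    · exfalso
      have heq : (⟨ts, hts_lt⟩ : Fin l.length) = ⟨0, h0⟩ := Fin.ext h
      rw [heq] at hts_gt
      exact absurd hac (not_le.mpr hts_gt)
    · exact h
  obtain ⟨hne, htree, hdec⟩ := hT
  have hwT : l.get t ∈ T.verts := (hmem _).mp (l.get_mem _)
  -- claim: l.get t already appears in l.take ts
  have hwtake : l.get t ∈ l.take ts := by
    by_contra hwt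
    obtain ⟨q⟩ := htree.isConnected.preconnected (⟨l.get ⟨0, h0⟩, haT⟩ : T.verts)
      (⟨l.get t, hwT⟩ : T.verts)
    have hp : q.bypass.IsPath := q.bypass_isPath
    have hall : ∀ y ∈ q.bypass.support, (y : Fin n) ≤ c :=
      support_le hcut q.bypass hp hac htc
    have ha_take : l.get ⟨0, h0⟩ ∈ l.take ts := by
      have hlen : 0 < (l.take ts).length := by
        rw [List.length_take]; omega
      refine List.mem_iff_getElem.mpr ⟨0, hlen, ?_⟩
      rw [List.getElem_take]
      simp
    obtain ⟨u, v, hu, hv, hvs, hadj⟩ :=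
      find_edge (fun x => x ∈ l.take ts) q.bypass ha_take hwt
    have hvmem : (v : Fin n) ∈
        {x : Fin n | x ∈ T.verts ∧ x ∉ l.take ts ∧ ∃ u ∈ l.take ts, T.Adj u x} :=
      ⟨v.2, hv, (u : Fin n), hu, hadj⟩
    have hle := (hleast ts hts_lt hts_pos).2 hvmem
    exact absurd (le_trans hle (hall v hvs)) (not_le.mpr hts_gt)
  obtain ⟨i, hi, hieq⟩ := List.mem_iff_getElem.mp hwtake
  have hits : i < ts := by
    have := (List.length_take : (l.take ts).length = _)
    omega
  rw [List.getElem_take] at hieq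
  have hil : i < l.length := lt_of_lt_of_le hits (le_of_lt hts_lt)
  have : i = t.val := by
    have hndi := List.Nodup.getElem_inj_iff hnd (hi := hil) (hj := t.isLt)
    rw [← hndi]
    rw [hieq]
    simp [List.get_eq_getElem]
  omega
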